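/- Let θ > 0, 0 < q < ∞ and K > 0. Let σ = (σ_s)_{s∈𝓕} be a family of real numbers with σ_s > 1 for every s ∈ 𝓕, and assume that (Σ_{s∈𝓕} p_s(θ)^q σ_s^{-q})^{1/(θq)} ≤ K. Then for every ξ > 1 and every s ∈ Λ(ξ) one has |s|₁ ≤ K ξ^{1/(θq)}. -/

import Mathlib

/-- `p_s(θ) = ∏_j (1 + s_j)^θ`, a finite product since `s` is finitely supported. -/
noncomputable def pFun (θ : ℝ) (s : ℕ →₀ ℕ) : ℝ :=
  ∏ j ∈ s.support, ((1 : ℝ) + s j) ^ θ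

lemma one_add_sum_le_prod_nat (t : Finset ℕ) (f : ℕ → ℕ) :
    1 + ∑ j ∈ t, f j ≤ ∏ j ∈ t, (1 + f j) := by
  induction t using Finset.induction with
  | empty => simp
  | insert _ _ h ih =>
    rename_i a tt
    rw [Finset.sum_insert h, Finset.prod_insert h]
    nlinarith [ih, Nat.zero_le (f a), Nat.zero_le (∑ j ∈ tt, f j)]

lemma pFun_nonneg (θ : ℝ) (s : ℕ →₀ ℕ) : 0 ≤ pFun θ s :=
  Finset.prod_nonneg fun j _ => Real.rpow_nonneg (by positivity) θ

/-- Lemma A.1(ii): if `(∑_{s∈𝓕} p_s(θ)^q σ_s^{-q})^{1/(θq)} ≤ K`,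
then for every `ξ > 1` and every `s ∈ Λ(ξ)` one has `|s|₁ ≤ K ξ^{1/(θq)}`. -/
theorem stmt_4 (θ q K : ℝ) (hθ : 0 < θ) (hq : 0 < q) (hK : 0 < K)
    (σ : (ℕ →₀ ℕ) → ℝ) (hσ : ∀ s, 1 < σ s)
    (hsum : Summable fun s => pFun θ s ^ q * σ s ^ (-q))
    (hle : (∑' s, pFun θ s ^ q * σ s ^ (-q)) ^ (1 / (θ * q)) ≤ K) :
    ∀ ξ : ℝ, 1 < ξ → ∀ s : ℕ →₀ ℕ, σ s ^ q ≤ ξ →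
      ((s.sum fun _ n => n : ℕ) : ℝ) ≤ K * ξ ^ (1 / (θ * q)) := by
  intro ξ hξ s hsξ
  have hξ0 : (0:ℝ) < ξ := lt_trans one_pos hξ
  have hθq : (0:ℝ) < θ * q := mul_pos hθ hq
  set N : ℝ := ((s.sum fun _ n => n : ℕ) : ℝ) with hN
  have hN0 : (0:ℝ) ≤ N := Nat.cast_nonneg _
  have hσ0 : (0:ℝ) < σ s := lt_trans one_pos (hσ s)
  set P : ℝ := ∏ j ∈ s.support, ((1 : ℝ) + s j) with hP
  have hP1 : (1 + N) ≤ P := by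
    have h2 : ((1 + ∑ j ∈ s.support, s j : ℕ) : ℝ) ≤ ((∏ j ∈ s.support, (1 + s j) : ℕ) : ℝ) := by
      exact_mod_cast one_add_sum_le_prod_nat s.support (fun j => s j)
    simpa [hP, hN, Finsupp.sum] using h2
  have hP0 : (0:ℝ) < P := lt_of_lt_of_le (by linarith) hP1
  have hpF : pFun θ s = P ^ θ := by
    rw [hP, pFun, ← Real.finset_prod_rpow]
    intro j _
    positivity
  have h1 : (1 + N) ^ (θ * q) ≤ pFun θ s ^ q := by
    rw [hpF, ← Real.rpow_mul hP0.le]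
    exact Real.rpow_le_rpow (by linarith) hP1 hθq.le
  have h2 : ξ⁻¹ ≤ σ s ^ (-q) := by
    rw [Real.rpow_neg hσ0.le]
    exact inv_anti₀ (Real.rpow_pos_of_pos hσ0 q) hsξ
  have hterm : (1 + N) ^ (θ * q) * ξ⁻¹ ≤ pFun θ s ^ q * σ s ^ (-q) :=
    mul_le_mul h1 h2 (by positivity) (Real.rpow_nonneg (pFun_nonneg θ s) q)
  have hT : (1 + N) ^ (θ * q) * ξ⁻¹ ≤ ∑' s, pFun θ s ^ q * σ s ^ (-q) :=
    hterm.trans (Summable.le_tsum hsum s fun b _ =>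
      mul_nonneg (Real.rpow_nonneg (pFun_nonneg θ b) q)
        (Real.rpow_nonneg (le_of_lt (lt_trans one_pos (hσ b))) _))
  have hKK : ((1 + N) ^ (θ * q) * ξ⁻¹) ^ (1 / (θ * q)) ≤ K :=
    le_trans (Real.rpow_le_rpow (by positivity) hT (by positivity)) hle
  rw [Real.mul_rpow (by positivity) (by positivity), ← Real.rpow_mul (by linarith),
    mul_one_div, div_self hθq.ne', Real.rpow_one, Real.inv_rpow hξ0.le] at hKK
  have hX : (0:ℝ) < ξ ^ (1 / (θ * q)) := Real.rpow_pos_of_pos hξ0 _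
  rw [← div_eq_mul_inv, div_le_iff₀ hX] at hKK
  linarith
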